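/- If all entries of a random matrix $W$ have strictly positive means, and $M$ is a random matrix independent of $W$ such that $\mathrm{Cov}(m_{ib}, m_{jd}) > 0$ for all indices $i,b,j,d$, then the product $WM$ satisfies $\mathrm{Cov}((WM)_{ab}, (WM)_{cd}) > 0$ for all indices $a,b,c,d$, provided the (mean-field) entries of $W$ are independent with nonnegative variances. -/

import Mathlib

open MeasureTheory ProbabilityTheory

/-- Covariance of two real random variables. -/
noncomputable def cov {Ω : Type*} [MeasurableSpace Ω] (μ : Measure Ω) (X Y : Ω → ℝ) : ℝ :=
  (∫ ω, X ω * Y ω ∂μ) - (∫ ω, X ω ∂μ) * (∫ ω, Y ω ∂μ)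

lemma integrable_mul_of_memL2 {Ω : Type*} [MeasurableSpace Ω] {μ : Measure Ω} {f g : Ω → ℝ}
    (hf : MemLp f 2 μ) (hg : MemLp g 2 μ) : Integrable (fun ω => f ω * g ω) μ := by
  have h : (1 : ENNReal) / 1 = 1 / 2 + 1 / 2 := by
    rw [ENNReal.div_add_div_same, one_div_one]
    norm_num
    rw [ENNReal.div_self] <;> norm_num
  have := hf.smul (r := 1) hg
  rw [memLp_one_iff_integrable] at this
  exact (by simpa [smul_eq_mul, mul_comm] using this : Integrable (f * g) μ)

/-- Multiplying by a mean-field random matrix with positive-mean entries preserves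
everywhere-positive covariance of the product matrix. -/
theorem mean_field_layer_preserves_positive_covariance
    {Ω : Type*} [MeasurableSpace Ω] (μ : Measure Ω) [IsProbabilityMeasure μ]
    {KL K1 K0 : ℕ} (hK1 : 0 < K1)
    (W : Fin KL → Fin K1 → Ω → ℝ) (M : Fin K1 → Fin K0 → Ω → ℝ)
    (hWmeas : ∀ a i, Measurable (W a i)) (hMmeas : ∀ i b, Measurable (M i b))
    (hWL2 : ∀ a i, MemLp (W a i) 2 μ) (hML2 : ∀ i b, MemLp (M i b) 2 μ)
    -- the entries of W are mutually independent (mean-field)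
    (hWindep : iIndepFun
      (fun p : Fin KL × Fin K1 => fun ω => W p.1 p.2 ω) μ)
    -- W is independent of M
    (hindep : IndepFun (fun ω => fun p : Fin KL × Fin K1 => W p.1 p.2 ω)
                       (fun ω => fun p : Fin K1 × Fin K0 => M p.1 p.2 ω) μ)
    -- entries of W have strictly positive means and nonnegative variances
    (hWmean : ∀ a i, 0 < ∫ ω, W a i ω ∂μ)
    (hWvar : ∀ a i, 0 ≤ cov μ (W a i) (W a i))
    -- entries of M have nonnegative means and all-positive pairwise covariances
    (hMmean : ∀ i b, 0 ≤ ∫ ω, M i b ω ∂μ)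
    (hMcov : ∀ i b j d, 0 < cov μ (M i b) (M j d))
    (a : Fin KL) (b : Fin K0) (c : Fin KL) (d : Fin K0) :
    0 < cov μ (fun ω => ∑ i, W a i ω * M i b ω)
              (fun ω => ∑ j, W c j ω * M j d ω) := by
  -- basic integrability
  have hWint : ∀ a' i, Integrable (W a' i) μ := fun a' i => (hWL2 a' i).integrable one_le_two
  have hMint : ∀ i b', Integrable (M i b') μ := fun i b' => (hML2 i b').integrable one_le_two
  have hWWint : ∀ (a' c' : Fin KL) (i j : Fin K1),
      Integrable (fun ω => W a' i ω * W c' j ω) μ :=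
    fun a' c' i j => integrable_mul_of_memL2 (hWL2 a' i) (hWL2 c' j)
  have hMMint : ∀ (i j : Fin K1) (b' d' : Fin K0),
      Integrable (fun ω => M i b' ω * M j d' ω) μ :=
    fun i j b' d' => integrable_mul_of_memL2 (hML2 i b') (hML2 j d')
  -- independence of any real function of W from any real function of M
  have hcomp : ∀ (f : (Fin KL × Fin K1 → ℝ) → ℝ) (g : (Fin K1 × Fin K0 → ℝ) → ℝ),
      Measurable f → Measurable g →
      IndepFun (fun ω => f (fun p => W p.1 p.2 ω)) (fun ω => g (fun p => M p.1 p.2 ω)) μ :=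
    fun f g hf hg => hindep.comp hf hg
  have hWMindep : ∀ (a' : Fin KL) (i j : Fin K1) (b' : Fin K0),
      IndepFun (W a' i) (fun ω => M j b' ω) μ :=
    fun a' i j b' => hcomp (fun v => v (a', i)) (fun v => v (j, b'))
      (measurable_pi_apply _) (measurable_pi_apply _)
  have hWWMMindep : ∀ (a' c' : Fin KL) (i j : Fin K1) (b' d' : Fin K0),
      IndepFun (fun ω => W a' i ω * W c' j ω) (fun ω => M i b' ω * M j d' ω) μ :=
    fun a' c' i j b' d' => hcomp (fun v => v (a', i) * v (c', j)) (fun v => v (i, b') * v (j, d'))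
      ((measurable_pi_apply _).mul (measurable_pi_apply _))
      ((measurable_pi_apply _).mul (measurable_pi_apply _))
  -- E[W M] = E[W] E[M]
  have hWMmul : ∀ (a' : Fin KL) (i j : Fin K1) (b' : Fin K0),
      (∫ ω, W a' i ω * M j b' ω ∂μ) = (∫ ω, W a' i ω ∂μ) * (∫ ω, M j b' ω ∂μ) :=
    fun a' i j b' => (hWMindep a' i j b').integral_fun_mul_eq_mul_integral
      (hWmeas a' i).aestronglyMeasurable (hMmeas j b').aestronglyMeasurable
  -- the integrand X i * Y j is integrable and its integral factors
  have hXYmul : ∀ (i j : Fin K1),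
      (∫ ω, (W a i ω * M i b ω) * (W c j ω * M j d ω) ∂μ)
        = (∫ ω, W a i ω * W c j ω ∂μ) * (∫ ω, M i b ω * M j d ω ∂μ) := by
    intro i j
    have h := (hWWMMindep a c i j b d).integral_fun_mul_eq_mul_integral
      ((hWmeas a i).mul (hWmeas c j)).aestronglyMeasurable
      ((hMmeas i b).mul (hMmeas j d)).aestronglyMeasurable
    rw [← h]
    congr 1; funext ω; ring
  have hXYint : ∀ (i j : Fin K1),
      Integrable (fun ω => (W a i ω * M i b ω) * (W c j ω * M j d ω)) μ := by
    intro i j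
    have h := (hWWMMindep a c i j b d).integrable_mul (hWWint a c i j) (hMMint i j b d)
    have he : (fun ω => (W a i ω * M i b ω) * (W c j ω * M j d ω))
        = (fun ω => W a i ω * W c j ω) * (fun ω => M i b ω * M j d ω) := by
      funext ω; simp [Pi.mul_apply]; ring
    rw [he]; exact h
  have hXint : ∀ i, Integrable (fun ω => W a i ω * M i b ω) μ :=
    fun i => integrable_mul_of_memL2 (hWL2 a i) (hML2 i b)
  have hYint : ∀ j, Integrable (fun ω => W c j ω * M j d ω) μ :=
    fun j => integrable_mul_of_memL2 (hWL2 c j) (hML2 j d)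
  -- expand the covariance of the sums as a double sum of covariances
  have hexpand : cov μ (fun ω => ∑ i, W a i ω * M i b ω) (fun ω => ∑ j, W c j ω * M j d ω)
      = ∑ i, ∑ j, cov μ (fun ω => W a i ω * M i b ω) (fun ω => W c j ω * M j d ω) := by
    unfold cov
    have h1 : (∫ ω, (∑ i, W a i ω * M i b ω) * (∑ j, W c j ω * M j d ω) ∂μ)
        = ∑ i, ∑ j, ∫ ω, (W a i ω * M i b ω) * (W c j ω * M j d ω) ∂μ := by
      have : ∀ ω, (∑ i, W a i ω * M i b ω) * (∑ j, W c j ω * M j d ω)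
          = ∑ i, ∑ j, (W a i ω * M i b ω) * (W c j ω * M j d ω) := by
        intro ω; rw [Finset.sum_mul_sum]
      simp_rw [this]
      rw [integral_finset_sum _ (fun i _ => integrable_finset_sum _ (fun j _ => hXYint i j))]
      exact Finset.sum_congr rfl fun i _ => integral_finset_sum _ (fun j _ => hXYint i j)
    have h2 : (∫ ω, (∑ i, W a i ω * M i b ω) ∂μ) = ∑ i, ∫ ω, W a i ω * M i b ω ∂μ :=
      integral_finset_sum _ (fun i _ => hXint i)
    have h3 : (∫ ω, (∑ j, W c j ω * M j d ω) ∂μ) = ∑ j, ∫ ω, W c j ω * M j d ω ∂μ :=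
      integral_finset_sum _ (fun j _ => hYint j)
    rw [h1, h2, h3, Finset.sum_mul_sum, ← Finset.sum_sub_distrib]
    exact Finset.sum_congr rfl fun i _ => by rw [← Finset.sum_sub_distrib]
  rw [hexpand]
  -- each covariance term is positive
  have hterm : ∀ i j, 0 < cov μ (fun ω => W a i ω * M i b ω) (fun ω => W c j ω * M j d ω) := by
    intro i j
    have hrw : cov μ (fun ω => W a i ω * M i b ω) (fun ω => W c j ω * M j d ω)
        = (∫ ω, W a i ω * W c j ω ∂μ) * cov μ (M i b) (M j d)
          + cov μ (W a i) (W c j) * ((∫ ω, M i b ω ∂μ) * (∫ ω, M j d ω ∂μ)) := by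
      unfold cov
      rw [hXYmul i j, hWMmul a i i b, hWMmul c j j d]
      ring
    rw [hrw]
    -- need : 0 < E[W a i * W c j] and 0 ≤ cov (W a i) (W c j)
    have hWW : 0 < (∫ ω, W a i ω * W c j ω ∂μ) ∧ 0 ≤ cov μ (W a i) (W c j) := by
      by_cases h : (a, i) = (c, j)
      · obtain ⟨h1, h2⟩ := Prod.mk.injEq _ _ _ _ ▸ h
        subst h1; subst h2
        have hv := hWvar a i
        have hmean := hWmean a i
        constructor
        · have : cov μ (W a i) (W a i)
              = (∫ ω, W a i ω * W a i ω ∂μ) - (∫ ω, W a i ω ∂μ) * (∫ ω, W a i ω ∂μ) := rfl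
          nlinarith [hv, hmean, this]
        · exact hv
      · have hind : IndepFun (W a i) (W c j) μ := by
          have := hWindep.indepFun (i := (a, i)) (j := (c, j)) h
          exact this
        have hm := hind.integral_fun_mul_eq_mul_integral (hWmeas a i).aestronglyMeasurable
          (hWmeas c j).aestronglyMeasurable
        constructor
        · rw [hm]; exact mul_pos (hWmean a i) (hWmean c j)
        · unfold cov; rw [hm]; simp
    have h1 : 0 < (∫ ω, W a i ω * W c j ω ∂μ) * cov μ (M i b) (M j d) :=
      mul_pos hWW.1 (hMcov i b j d)
    have h2 : 0 ≤ cov μ (W a i) (W c j) * ((∫ ω, M i b ω ∂μ) * (∫ ω, M j d ω ∂μ)) :=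
      mul_nonneg hWW.2 (mul_nonneg (hMmean i b) (hMmean j d))
    linarith
  have hne : (Finset.univ : Finset (Fin K1)).Nonempty := by
    simpa [Finset.univ_nonempty_iff] using Fin.pos_iff_nonempty.mp hK1
  exact Finset.sum_pos (fun i _ => Finset.sum_pos (fun j _ => hterm i j) hne) hne
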